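/- Let p > 3, ξ ∈ ℝ, r > 0, and set y = √(1 − x²) (taking r = 1). Then the function f(x) = |x+y+ξ|^p + |x+y−ξ|^p + |y−x+ξ|^p + |y−x−ξ|^p is strictly increasing on the interval (0, 1/√2), assuming ξ ≥ 0. -/

import Mathlib

open Set Filter

/-- Derivative of `|t|^q * t` for `q > 0`. -/
lemma hasDerivAt_abs_rpow_mul {q : ℝ} (hq : 0 < q) (u : ℝ) :
    HasDerivAt (fun t : ℝ => |t| ^ q * t) ((q + 1) * |u| ^ q) u := by
  rcases lt_trichotomy u 0 with h | h | h
  · have h1 : HasDerivAt (fun s : ℝ => s ^ (q + 1)) ((q + 1) * (-u) ^ (q + 1 - 1)) (-u) :=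
      Real.hasDerivAt_rpow_const (Or.inl (by linarith))
    have h2 : HasDerivAt (fun t : ℝ => (-t) ^ (q + 1)) ((q + 1) * (-u) ^ (q + 1 - 1) * (-1)) u :=
      h1.comp u ((hasDerivAt_id u).neg)
    have h3 := h2.neg
    have heq : (fun t : ℝ => |t| ^ q * t) =ᶠ[nhds u] fun t : ℝ => -((-t) ^ (q + 1)) := by
      filter_upwards [Iio_mem_nhds h] with t ht
      rw [abs_of_neg ht, Real.rpow_add_one (ne_of_gt (neg_pos.mpr ht)) q]
      ring
    have h4 := h3.congr_of_eventuallyEq heq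
    convert h4 using 1
    · rfl
    · rfl
    rw [abs_of_neg h]
    have e : q + 1 - 1 = q := by ring
    rw [e]; ring
  · subst h
    have e0 : (q + 1) * |(0:ℝ)| ^ q = 0 := by
      simp [Real.zero_rpow (ne_of_gt hq)]
    rw [e0, hasDerivAt_iff_tendsto_slope]
    have hlim : Tendsto (fun t : ℝ => |t| ^ q) (nhdsWithin 0 {0}ᶜ) (nhds 0) := by
      have hg : ContinuousAt (fun s : ℝ => s ^ q) |(0:ℝ)| := by
        rw [abs_zero]
        exact Real.continuousAt_rpow_const 0 q (Or.inr hq.le)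
      have hc : ContinuousAt (fun t : ℝ => |t| ^ q) 0 :=
        hg.comp continuous_abs.continuousAt
      have := hc.tendsto
      simp only [abs_zero, Real.zero_rpow (ne_of_gt hq)] at this
      exact this.mono_left nhdsWithin_le_nhds
    apply Tendsto.congr' ?_ hlim
    filter_upwards [self_mem_nhdsWithin] with t ht
    have ht' : t ≠ 0 := Set.mem_compl_singleton_iff.mp ht
    rw [slope_def_field]
    simp only [abs_zero, Real.zero_rpow (ne_of_gt hq), zero_mul, sub_zero]
    rw [mul_div_cancel_right₀ _ ht']
  · have h1 : HasDerivAt (fun s : ℝ => s ^ (q + 1)) ((q + 1) * u ^ (q + 1 - 1)) u :=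
      Real.hasDerivAt_rpow_const (Or.inl (ne_of_gt h))
    have heq : (fun t : ℝ => |t| ^ q * t) =ᶠ[nhds u] fun t : ℝ => t ^ (q + 1) := by
      filter_upwards [Ioi_mem_nhds h] with t ht
      rw [abs_of_pos ht, Real.rpow_add_one (ne_of_gt ht) q]
    have h3 := h1.congr_of_eventuallyEq heq
    convert h3 using 1
    · rfl
    · rfl
    rw [abs_of_pos h]
    have e : q + 1 - 1 = q := by ring
    rw [e]

/-- Key inequality: for `q > 1` and `0 < t < ξ`,
`(ξ+t)^q (ξ - qt) < (ξ-t)^q (ξ + qt)`. -/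
lemma key_ineq {q ξ : ℝ} (hq : 1 < q) {t : ℝ} (ht : 0 < t) (htξ : t < ξ) :
    (ξ + t) ^ q * (ξ - q * t) < (ξ - t) ^ q * (ξ + q * t) := by
  have hξ0 : 0 < ξ := ht.trans htξ
  set F : ℝ → ℝ := fun s => (ξ - s) ^ q * (ξ + q * s) - (ξ + s) ^ q * (ξ - q * s) with hF
  have hcont : ContinuousOn F (Icc 0 ξ) := by
    rw [hF]
    apply ContinuousOn.sub
    · exact (ContinuousOn.rpow_const (by fun_prop) (fun x _ => Or.inr (by linarith))).mul
        (by fun_prop)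
    · exact (ContinuousOn.rpow_const (by fun_prop) (fun x _ => Or.inr (by linarith))).mul
        (by fun_prop)
  have hmono : StrictMonoOn F (Icc 0 ξ) := by
    apply strictMonoOn_of_deriv_pos (convex_Icc 0 ξ) hcont
    intro s hs
    rw [interior_Icc] at hs
    obtain ⟨hs0, hsξ⟩ := hs
    have hm : (0:ℝ) < ξ - s := by linarith
    have hp : (0:ℝ) < ξ + s := by linarith
    have a1 : HasDerivAt (fun s : ℝ => (ξ - s) ^ q) (q * (ξ - s) ^ (q - 1) * (-1)) s :=
      (Real.hasDerivAt_rpow_const (Or.inl (ne_of_gt hm))).comp s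
        ((hasDerivAt_id s).const_sub ξ)
    have a2 : HasDerivAt (fun s : ℝ => ξ + q * s) (q * 1) s :=
      ((hasDerivAt_id s).const_mul q).const_add ξ
    have b1 : HasDerivAt (fun s : ℝ => (ξ + s) ^ q) (q * (ξ + s) ^ (q - 1) * 1) s :=
      (Real.hasDerivAt_rpow_const (Or.inl (ne_of_gt hp))).comp s
        ((hasDerivAt_id s).const_add ξ)
    have b2 : HasDerivAt (fun s : ℝ => ξ - q * s) (-(q * 1)) s :=
      ((hasDerivAt_id s).const_mul q).const_sub ξ
    have hd : HasDerivAt F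
        ((q * (ξ - s) ^ (q - 1) * (-1)) * (ξ + q * s) + (ξ - s) ^ q * (q * 1) -
          ((q * (ξ + s) ^ (q - 1) * 1) * (ξ - q * s) + (ξ + s) ^ q * (-(q * 1)))) s :=
      (a1.mul a2).sub (b1.mul b2)
    rw [hd.deriv]
    have em : (ξ - s) ^ q = (ξ - s) ^ (q - 1) * (ξ - s) := by
      rw [← Real.rpow_add_one (ne_of_gt hm) (q - 1)]
      congr 1; ring
    have ep : (ξ + s) ^ q = (ξ + s) ^ (q - 1) * (ξ + s) := by
      rw [← Real.rpow_add_one (ne_of_gt hp) (q - 1)]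
      congr 1; ring
    have hlt : (ξ - s) ^ (q - 1) < (ξ + s) ^ (q - 1) :=
      Real.rpow_lt_rpow hm.le (by linarith) (by linarith)
    rw [em, ep]
    have hqpos : (0:ℝ) < q := by linarith
    nlinarith [mul_pos (mul_pos hqpos hs0) (sub_pos.mpr hlt)]
  have h0 : F 0 = 0 := by simp [hF]
  have hFt := hmono (⟨le_refl 0, hξ0.le⟩ : (0:ℝ) ∈ Icc 0 ξ) (⟨ht.le, htξ.le⟩ : t ∈ Icc 0 ξ) ht
  rw [h0] at hFt
  simp only [hF] at hFt
  linarith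

/-- Positivity of the derivative numerator `E(t)`. -/
lemma keyE {q ξ t : ℝ} (hq : 1 < q) (hξ : 0 ≤ ξ) (ht : 0 < t) :
    0 < (t + ξ) ^ q * (q * t - ξ) + |t - ξ| ^ q * (q * t + ξ) := by
  rcases le_or_gt ξ t with h | h
  · have h1 : 0 < (t + ξ) ^ q * (q * t - ξ) :=
      mul_pos (Real.rpow_pos_of_pos (by linarith) q) (by nlinarith)
    have h2 : 0 ≤ |t - ξ| ^ q * (q * t + ξ) :=
      mul_nonneg (Real.rpow_nonneg (abs_nonneg _) q) (by nlinarith)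
    linarith
  · have := key_ineq hq ht h
    rw [abs_sub_comm, abs_of_pos (by linarith : (0:ℝ) < ξ - t), add_comm t ξ]
    nlinarith [this]

/-- `k(t)/t` is strictly increasing on `(0, ∞)`. -/
lemma ratio_mono {q ξ : ℝ} (hq : 1 < q) (hξ : 0 ≤ ξ) :
    StrictMonoOn
      (fun t : ℝ => (|t + ξ| ^ q * (t + ξ) + |t - ξ| ^ q * (t - ξ)) / t) (Ioi 0) := by
  apply strictMonoOn_of_deriv_pos (convex_Ioi 0)
  · apply ContinuousOn.div
    · have c1 : Continuous fun t : ℝ => |t + ξ| ^ q :=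
        ((continuous_id.add continuous_const).abs).rpow_const (fun x => Or.inr (by linarith))
      have c2 : Continuous fun t : ℝ => |t - ξ| ^ q :=
        ((continuous_id.sub continuous_const).abs).rpow_const (fun x => Or.inr (by linarith))
      exact ((c1.mul (continuous_id.add continuous_const)).add
        (c2.mul (continuous_id.sub continuous_const))).continuousOn
    · exact continuousOn_id
    · intro t ht
      exact ne_of_gt ht
  · intro t ht
    rw [interior_Ioi] at ht
    have ht0 : (0:ℝ) < t := ht
    have hq0 : (0:ℝ) < q - 1 := by linarith
    have hk1 : HasDerivAt (fun t : ℝ => |t + ξ| ^ q * (t + ξ)) ((q + 1) * |t + ξ| ^ q) t := by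
      have := (hasDerivAt_abs_rpow_mul (by linarith : (0:ℝ) < q) (t + ξ)).comp t
        ((hasDerivAt_id t).add_const ξ)
      rw [mul_one] at this; exact this
    have hk2 : HasDerivAt (fun t : ℝ => |t - ξ| ^ q * (t - ξ)) ((q + 1) * |t - ξ| ^ q) t := by
      have := (hasDerivAt_abs_rpow_mul (by linarith : (0:ℝ) < q) (t - ξ)).comp t
        ((hasDerivAt_id t).sub_const ξ)
      rw [mul_one] at this; exact this
    have hknum : HasDerivAt (fun t : ℝ => |t + ξ| ^ q * (t + ξ) + |t - ξ| ^ q * (t - ξ))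
        ((q + 1) * |t + ξ| ^ q + (q + 1) * |t - ξ| ^ q) t := hk1.add hk2
    have hd : HasDerivAt
        (fun t : ℝ => (|t + ξ| ^ q * (t + ξ) + |t - ξ| ^ q * (t - ξ)) / t)
        ((((q + 1) * |t + ξ| ^ q + (q + 1) * |t - ξ| ^ q) * t -
          (|t + ξ| ^ q * (t + ξ) + |t - ξ| ^ q * (t - ξ)) * 1) / t ^ 2) t :=
      hknum.div (hasDerivAt_id t) (ne_of_gt ht0)
    rw [hd.deriv]
    apply div_pos ?_ (by positivity)
    have hE := keyE hq hξ ht0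
    rw [show |t + ξ| = t + ξ from abs_of_pos (by linarith)]
    nlinarith [hE]

/-- For `p > 3`, `ξ ≥ 0` and `y = √(1 - x²)`, the function
`f(x) = |x+y+ξ|^p + |x+y-ξ|^p + |y-x+ξ|^p + |y-x-ξ|^p` is strictly increasing
on `(0, 1/√2)`. -/
theorem stmt_3 (p ξ : ℝ) (hp : 3 < p) (hξ : 0 ≤ ξ) :
    StrictMonoOn
      (fun x : ℝ =>
        |x + Real.sqrt (1 - x ^ 2) + ξ| ^ p + |x + Real.sqrt (1 - x ^ 2) - ξ| ^ p +
          |Real.sqrt (1 - x ^ 2) - x + ξ| ^ p + |Real.sqrt (1 - x ^ 2) - x - ξ| ^ p)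
      (Set.Ioo 0 (1 / Real.sqrt 2)) := by
  have hp1 : (1:ℝ) < p := by linarith
  have hq : (1:ℝ) < p - 2 := by linarith
  have hp0 : (0:ℝ) < p := by linarith
  apply strictMonoOn_of_deriv_pos (convex_Ioo _ _)
  · have hsq : Continuous fun x : ℝ => Real.sqrt (1 - x ^ 2) :=
      Real.continuous_sqrt.comp (by fun_prop)
    have c1 : Continuous fun x : ℝ => |x + Real.sqrt (1 - x ^ 2) + ξ| ^ p :=
      (((continuous_id.add hsq).add continuous_const).abs).rpow_const
        (fun x => Or.inr (by linarith))
    have c2 : Continuous fun x : ℝ => |x + Real.sqrt (1 - x ^ 2) - ξ| ^ p :=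
      (((continuous_id.add hsq).sub continuous_const).abs).rpow_const
        (fun x => Or.inr (by linarith))
    have c3 : Continuous fun x : ℝ => |Real.sqrt (1 - x ^ 2) - x + ξ| ^ p :=
      (((hsq.sub continuous_id).add continuous_const).abs).rpow_const
        (fun x => Or.inr (by linarith))
    have c4 : Continuous fun x : ℝ => |Real.sqrt (1 - x ^ 2) - x - ξ| ^ p :=
      (((hsq.sub continuous_id).sub continuous_const).abs).rpow_const
        (fun x => Or.inr (by linarith))
    exact (((c1.add c2).add c3).add c4).continuousOn
  · intro x hx
    rw [interior_Ioo] at hx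
    obtain ⟨hx0, hx2⟩ := hx
    have hx2' : x ^ 2 < 1 / 2 := by
      have h2 : x ^ 2 < (1 / Real.sqrt 2) ^ 2 :=
        pow_lt_pow_left₀ hx2 hx0.le (by norm_num)
      rwa [div_pow, one_pow, Real.sq_sqrt (by norm_num : (0:ℝ) ≤ 2)] at h2
    have h1x : (0:ℝ) < 1 - x ^ 2 := by linarith
    set y := Real.sqrt (1 - x ^ 2) with hy
    have hyx : x < y := by
      have := Real.sqrt_lt_sqrt (sq_nonneg x) (by linarith : x ^ 2 < 1 - x ^ 2)
      rwa [Real.sqrt_sq hx0.le] at this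
    have hy0 : (0:ℝ) < y := hx0.trans hyx
    have hyne : y ≠ 0 := ne_of_gt hy0
    have hdy : HasDerivAt (fun x : ℝ => Real.sqrt (1 - x ^ 2)) (-x / y) x := by
      have h1 : HasDerivAt (fun x : ℝ => 1 - x ^ 2) (-(2 * x)) x := by
        simpa using (hasDerivAt_pow 2 x).const_sub 1
      have h2 := (Real.hasDerivAt_sqrt (ne_of_gt h1x)).comp x h1
      convert h2 using 1
      · rfl
      · rfl
      · rfl
      rw [hy]
      have hs : Real.sqrt (1 - x ^ 2) ≠ 0 := hy ▸ hyne
      field_simp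
    have hinA : HasDerivAt (fun x : ℝ => x + Real.sqrt (1 - x ^ 2) + ξ) (1 + -x / y) x :=
      ((hasDerivAt_id x).add hdy).add_const ξ
    have hinB : HasDerivAt (fun x : ℝ => x + Real.sqrt (1 - x ^ 2) - ξ) (1 + -x / y) x :=
      ((hasDerivAt_id x).add hdy).sub_const ξ
    have hinC : HasDerivAt (fun x : ℝ => Real.sqrt (1 - x ^ 2) - x + ξ) (-x / y - 1) x :=
      (hdy.sub (hasDerivAt_id x)).add_const ξ
    have hinD : HasDerivAt (fun x : ℝ => Real.sqrt (1 - x ^ 2) - x - ξ) (-x / y - 1) x :=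
      (hdy.sub (hasDerivAt_id x)).sub_const ξ
    have hA : HasDerivAt (fun x : ℝ => |x + Real.sqrt (1 - x ^ 2) + ξ| ^ p)
        (p * |x + y + ξ| ^ (p - 2) * (x + y + ξ) * (1 + -x / y)) x :=
      by have := (hasDerivAt_abs_rpow (x + y + ξ) hp1).comp x hinA; exact this
    have hB : HasDerivAt (fun x : ℝ => |x + Real.sqrt (1 - x ^ 2) - ξ| ^ p)
        (p * |x + y - ξ| ^ (p - 2) * (x + y - ξ) * (1 + -x / y)) x :=
      by have := (hasDerivAt_abs_rpow (x + y - ξ) hp1).comp x hinB; exact this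
    have hC : HasDerivAt (fun x : ℝ => |Real.sqrt (1 - x ^ 2) - x + ξ| ^ p)
        (p * |y - x + ξ| ^ (p - 2) * (y - x + ξ) * (-x / y - 1)) x :=
      by have := (hasDerivAt_abs_rpow (y - x + ξ) hp1).comp x hinC; exact this
    have hD : HasDerivAt (fun x : ℝ => |Real.sqrt (1 - x ^ 2) - x - ξ| ^ p)
        (p * |y - x - ξ| ^ (p - 2) * (y - x - ξ) * (-x / y - 1)) x :=
      by have := (hasDerivAt_abs_rpow (y - x - ξ) hp1).comp x hinD; exact this
    have hf : HasDerivAt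
        (fun x : ℝ =>
          |x + Real.sqrt (1 - x ^ 2) + ξ| ^ p + |x + Real.sqrt (1 - x ^ 2) - ξ| ^ p +
            |Real.sqrt (1 - x ^ 2) - x + ξ| ^ p + |Real.sqrt (1 - x ^ 2) - x - ξ| ^ p)
        (p * |x + y + ξ| ^ (p - 2) * (x + y + ξ) * (1 + -x / y) +
          p * |x + y - ξ| ^ (p - 2) * (x + y - ξ) * (1 + -x / y) +
          p * |y - x + ξ| ^ (p - 2) * (y - x + ξ) * (-x / y - 1) +
          p * |y - x - ξ| ^ (p - 2) * (y - x - ξ) * (-x / y - 1)) x :=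
      ((hA.add hB).add hC).add hD
    rw [hf.deriv]
    have hk := (ratio_mono hq hξ) (Set.mem_Ioi.mpr (by linarith : (0:ℝ) < y - x))
      (Set.mem_Ioi.mpr (by linarith : (0:ℝ) < x + y)) (by linarith : y - x < x + y)
    rw [div_lt_div_iff₀ (by linarith) (by linarith)] at hk
    have hform :
        p * |x + y + ξ| ^ (p - 2) * (x + y + ξ) * (1 + -x / y) +
          p * |x + y - ξ| ^ (p - 2) * (x + y - ξ) * (1 + -x / y) +
          p * |y - x + ξ| ^ (p - 2) * (y - x + ξ) * (-x / y - 1) +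
          p * |y - x - ξ| ^ (p - 2) * (y - x - ξ) * (-x / y - 1) =
        p / y *
          ((|x + y + ξ| ^ (p - 2) * (x + y + ξ) + |x + y - ξ| ^ (p - 2) * (x + y - ξ)) * (y - x) -
           (|y - x + ξ| ^ (p - 2) * (y - x + ξ) + |y - x - ξ| ^ (p - 2) * (y - x - ξ)) * (x + y)) := by
      field_simp
      ring
    rw [hform]
    exact mul_pos (div_pos hp0 hy0) (sub_pos.mpr hk)
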